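/- For every d ≥ 2 and all pairs (i,j) with d+1 ≤ j < i ≤ n, the basis vector u_{ij} (and hence every vector of the one-dimensional subspace L'_{ij} = ℂ·u_{ij}) belongs to the depth-d resonance variety R_d = { a ∈ V : there exists a linear subspace W ⊆ V with dim_ℂ W = d, a ∉ W, and a ∧ b ∈ R for all b ∈ W }. -/
import Mathlib


/-- Index set for the basis `{u_{ij} : 1 ≤ j < i ≤ n}` (`0`-indexed). -/
abbrev RIdx (n : ℕ) := { p : Fin n × Fin n // p.2 < p.1 }

/-- `V = H¹(PΣₙ⁺;ℂ)`, the `ℂ`-vector space with basis `{u_{ij} : j < i}`. -/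
abbrev Vn (n : ℕ) := RIdx n → ℂ

/-- The basis vector `u_{ij}` (for `j < i`). -/
noncomputable def u (n : ℕ) (i j : Fin n) (h : j < i) : Vn n := Pi.single ⟨(i, j), h⟩ 1

/-- The wedge `a ∧ b`, viewed inside the exterior algebra `Λ(V)`. -/
noncomputable def wedge (n : ℕ) (a b : Vn n) : ExteriorAlgebra ℂ (Vn n) :=
  ExteriorAlgebra.ι ℂ a * ExteriorAlgebra.ι ℂ b

/-- The span `R ⊆ Λ²V` of the degree-2 relations `u_{ij} ∧ (u_{ik} − u_{jk})`
(`k < j < i`) of the cohomology ring of `PΣₙ⁺`. -/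
noncomputable def ResRel (n : ℕ) : Submodule ℂ (ExteriorAlgebra ℂ (Vn n)) :=
  Submodule.span ℂ { w | ∃ (i j k : Fin n) (hkj : k < j) (hji : j < i),
    w = wedge n (u n i j hji) (u n i k (hkj.trans hji) - u n j k hkj) }

/-- The first resonance variety `R₁ = {a ∈ V : ∃ b ∉ ℂ·a, a ∧ b ∈ R}`. -/
noncomputable def R1 (n : ℕ) : Set (Vn n) :=
  { a | ∃ b : Vn n, b ∉ Submodule.span ℂ {a} ∧ wedge n a b ∈ ResRel n }

/-- The linear subspace `L_{ij} ⊆ V` (for `j < i`) cut out by the equations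
`x_{il} + x_{jl} = 0` (`l < j`), `x_{il} = 0` (`j < l < i`), and `x_{st} = 0`
(`t < s`, `s ∉ {i,j}`). -/
noncomputable def L (n : ℕ) (i j : Fin n) (hji : j < i) : Submodule ℂ (Vn n) where
  carrier := { a |
    (∀ (l : Fin n) (h : l < j), a ⟨(i, l), h.trans hji⟩ + a ⟨(j, l), h⟩ = 0) ∧
    (∀ (l : Fin n) (h1 : j < l) (h2 : l < i), a ⟨(i, l), h2⟩ = 0) ∧
    (∀ (s t : Fin n) (h : t < s), s ≠ i → s ≠ j → a ⟨(s, t), h⟩ = 0) }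
  zero_mem' := by
    refine ⟨fun l h => ?_, fun l h1 h2 => ?_, fun s t h hs1 hs2 => ?_⟩ <;> simp
  add_mem' := by
    rintro a b ⟨ha1, ha2, ha3⟩ ⟨hb1, hb2, hb3⟩
    refine ⟨fun l h => ?_, fun l h1 h2 => ?_, fun s t h hs1 hs2 => ?_⟩
    · have h1 := ha1 l h; have h2 := hb1 l h
      simp only [Pi.add_apply]
      linear_combination h1 + h2
    · simp only [Pi.add_apply, ha2 l h1 h2, hb2 l h1 h2, add_zero]
    · simp only [Pi.add_apply, ha3 s t h hs1 hs2, hb3 s t h hs1 hs2, add_zero]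
  smul_mem' := by
    rintro c a ⟨ha1, ha2, ha3⟩
    refine ⟨fun l h => ?_, fun l h1 h2 => ?_, fun s t h hs1 hs2 => ?_⟩
    · have h1 := ha1 l h
      simp only [Pi.smul_apply, smul_eq_mul]
      linear_combination c * h1
    · simp only [Pi.smul_apply, ha2 l h1 h2, smul_zero]
    · simp only [Pi.smul_apply, ha3 s t h hs1 hs2, smul_zero]

/-- The depth-`d` resonance variety
`R_d = { a ∈ V : ∃ W ⊆ V, dim W = d, a ∉ W, a ∧ b ∈ R for all b ∈ W }`. -/
noncomputable def Rd (n d : ℕ) : Set (Vn n) :=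
  { a | ∃ W : Submodule ℂ (Vn n), Module.finrank ℂ W = d ∧ a ∉ W ∧
      ∀ b ∈ W, wedge n a b ∈ ResRel n }

theorem u_smul_mem_Rd (n d : ℕ) (hd : 2 ≤ d) (i j : Fin n) (hji : j < i)
    (hj : d ≤ j.val) (c : ℂ) (hc : c ≠ 0) : c • u n i j hji ∈ Rd n d := by
  have hij : i ≠ j := ne_of_gt hji
  set kn : Fin d → Fin n := fun k => ⟨k, (k.isLt.trans_le hj).trans j.isLt⟩ with hknd
  have hkj : ∀ k : Fin d, kn k < j := fun k => k.isLt.trans_le hj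
  set v : Fin d → Vn n :=
    fun k => u n i (kn k) ((hkj k).trans hji) - u n j (kn k) (hkj k) with hvd
  have hkninj : ∀ k m : Fin d, kn k = kn m ↔ k = m := fun k m =>
    ⟨fun h2 => Fin.ext (show (k:ℕ) = m from congrArg (fun x : Fin n => x.val) h2), fun h2 => by rw [h2]⟩
  have hli : LinearIndependent ℂ v := by
    rw [Fintype.linearIndependent_iff]
    intro g hg k
    have h := congrFun hg ⟨(i, kn k), (hkj k).trans hji⟩
    simp only [Finset.sum_apply, Pi.smul_apply, Pi.sub_apply, Pi.zero_apply, hvd, u,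
      Pi.single_apply, smul_eq_mul, Subtype.mk.injEq, Prod.mk.injEq, hkninj,
      hij, false_and, if_false, sub_zero, true_and, mul_ite, mul_one, mul_zero,
      Finset.sum_ite_eq, Finset.mem_univ, if_true] at h
    exact h
  refine ⟨Submodule.span ℂ (Set.range v), ?_, ?_, ?_⟩
  · rw [finrank_span_eq_card hli]; simp
  · intro hmem
    have hker : Submodule.span ℂ (Set.range v) ≤
        LinearMap.ker (LinearMap.proj (R := ℂ) (⟨(i, j), hji⟩ : RIdx n)) := by
      rw [Submodule.span_le]
      rintro _ ⟨k, rfl⟩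
      have h1 : kn k ≠ j := ne_of_lt (hkj k)
      simp only [SetLike.mem_coe, LinearMap.mem_ker, LinearMap.proj_apply, hvd, u,
        Pi.sub_apply, Pi.single_apply, Subtype.mk.injEq, Prod.mk.injEq]
      rw [if_neg (by tauto), if_neg (by tauto)]
      ring
    have := hker hmem
    simp only [LinearMap.mem_ker, LinearMap.proj_apply, Pi.smul_apply, u,
      Pi.single_eq_same, smul_eq_mul, mul_one] at this
    exact hc this
  · intro b hb
    set ψ : Vn n →ₗ[ℂ] ExteriorAlgebra ℂ (Vn n) :=
      (LinearMap.mulLeft ℂ (ExteriorAlgebra.ι ℂ (c • u n i j hji))).comp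
        (ExteriorAlgebra.ι ℂ) with hψ
    have hle : Submodule.span ℂ (Set.range v) ≤ (ResRel n).comap ψ := by
      rw [Submodule.span_le]
      rintro _ ⟨k, rfl⟩
      simp only [SetLike.mem_coe, Submodule.mem_comap, hψ, LinearMap.comp_apply,
        LinearMap.mulLeft_apply]
      have : ExteriorAlgebra.ι ℂ (c • u n i j hji) * ExteriorAlgebra.ι ℂ (v k)
          = c • wedge n (u n i j hji) (v k) := by
        rw [map_smul, smul_mul_assoc]; rfl
      rw [this]
      exact Submodule.smul_mem _ _
        (Submodule.subset_span ⟨i, j, kn k, hkj k, hji, rfl⟩)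
    exact hle hb

/-- For every `d ≥ 2` and all pairs `(i,j)` with `d+1 ≤ j < i ≤ n` (`0`-indexed:
`d ≤ j.val`), the basis vector `u_{ij}`—and hence every nonzero vector of the line
`L'_{ij} = ℂ·u_{ij}`—belongs to the depth-`d` resonance variety `R_d`. -/
theorem u_mem_Rd (n d : ℕ) (hn : 3 ≤ n) (hd : 2 ≤ d) (i j : Fin n) (hji : j < i)
    (hj : d ≤ j.val) :
    u n i j hji ∈ Rd n d ∧ ∀ c : ℂ, c ≠ 0 → c • u n i j hji ∈ Rd n d := by
  constructor
  · have := u_smul_mem_Rd n d hd i j hji hj 1 one_ne_zero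
    simpa using this
  · exact fun c hc => u_smul_mem_Rd n d hd i j hji hj c hc
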